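/- For a qubit state ρ with purity P and Pauli observables A = a·σ, B = b·σ, the average over uniformly random unit vectors a, b of the generalized Robertson bound ((λ_max+λ_min)²/(4(λ_max−λ_min)²))|Tr(ρ[A,B])|² equals 2/9, independent of P (for ρ not maximally mixed). -/

import Mathlib

open Matrix MeasureTheory ComplexOrder
open scoped ENNReal NNReal

noncomputable def pauli : Fin 3 → Matrix (Fin 2) (Fin 2) ℂ :=
  ![!![0, 1; 1, 0], !![0, -Complex.I; Complex.I, 0], !![1, 0; 0, -1]]

/-- A Pauli observable `a · σ` for a direction vector `a ∈ ℝ³`. -/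
noncomputable def pauliObs (a : EuclideanSpace ℝ (Fin 3)) : Matrix (Fin 2) (Fin 2) ℂ :=
  ∑ i, (a i : ℂ) • pauli i

noncomputable abbrev E3 := EuclideanSpace ℝ (Fin 3)
noncomputable abbrev E2 := EuclideanSpace ℝ (Fin 2)

/-- signed permutation as a linear isometry equivalence -/
noncomputable def sp (π : Equiv.Perm (Fin 3)) (ε : Fin 3 → ℝ) (hε : ∀ j, ε j ^ 2 = 1) :
    E3 ≃ₗᵢ[ℝ] E3 where
  toLinearEquiv :=
  { toFun := fun x => WithLp.toLp 2 (fun j => ε j * x (π j) : Fin 3 → ℝ)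
    invFun := fun y => WithLp.toLp 2 (fun j => ε (π.symm j) * y (π.symm j) : Fin 3 → ℝ)
    left_inv := by
      intro x; ext j
      show ε (π.symm j) * (ε (π.symm j) * x (π (π.symm j))) = x j
      rw [Equiv.apply_symm_apply, ← mul_assoc, ← sq, hε, one_mul]
    right_inv := by
      intro y; ext j
      show ε j * (ε (π.symm (π j)) * y (π.symm (π j))) = y j
      rw [Equiv.symm_apply_apply, ← mul_assoc, ← sq, hε, one_mul]
    map_add' := by intro x y; ext j; show ε j * (x (π j) + y (π j)) = _; ring_nf; rfl
    map_smul' := by intro c x; ext j; show ε j * (c * x (π j)) = c * (ε j * x (π j)); ring }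
  norm_map' := by
    intro x
    rw [EuclideanSpace.norm_eq, EuclideanSpace.norm_eq]
    congr 1
    calc ∑ j, ‖(ε j * x (π j) : ℝ)‖ ^ 2 = ∑ j, ‖x (π j)‖ ^ 2 := by
          refine Finset.sum_congr rfl fun j _ => ?_
          rw [norm_mul, mul_pow, Real.norm_eq_abs, sq_abs, hε, one_mul]
      _ = ∑ j, ‖x j‖ ^ 2 := Equiv.sum_comp π (fun i => ‖x i‖ ^ 2)

noncomputable abbrev S2 : Set E3 := Metric.sphere (0 : E3) 1
noncomputable abbrev μ3 : Measure E3 := μH[2]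

lemma sp_apply (π : Equiv.Perm (Fin 3)) (ε : Fin 3 → ℝ) (hε : ∀ j, ε j ^ 2 = 1)
    (x : E3) (j : Fin 3) : sp π ε hε x j = ε j * x (π j) := rfl

lemma inv_integral (e : E3 ≃ₗᵢ[ℝ] E3) (f : E3 → ℝ) :
    ∫ x in S2, f (e x) ∂μ3 = ∫ x in S2, f x ∂μ3 := by
  have hpre : (e.toIsometryEquiv) ⁻¹' S2 = S2 := by
    ext x
    simp only [Set.mem_preimage, mem_sphere_zero_iff_norm, S2, Metric.mem_sphere,
      dist_zero_right]
    rw [e.coe_toIsometryEquiv, e.norm_map]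
  have := (e.toIsometryEquiv.measurePreserving_hausdorffMeasure 2).setIntegral_preimage_emb
    (e.toIsometryEquiv.toHomeomorph.measurableEmbedding) f S2
  rw [hpre] at this
  exact this

noncomputable abbrev μ2 : Measure E2 := μH[2]

instance : (μ2).IsAddHaarMeasure := by
  have h : (2:ℝ) = (Module.finrank ℝ E2 : ℝ) := by simp [finrank_euclideanSpace_fin]
  rw [show μ2 = μH[(Module.finrank ℝ E2 : ℝ)] by rw [← h]]
  infer_instance

lemma norm2_E2' (u : E2) : ‖u‖ ^ 2 = u 0 ^ 2 + u 1 ^ 2 := by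
  rw [EuclideanSpace.norm_eq, Real.sq_sqrt (by positivity)]
  simp [Fin.sum_univ_two, Real.norm_eq_abs, sq_abs]

noncomputable def v2 (a b : ℝ) : E2 := (WithLp.equiv 2 (Fin 2 → ℝ)).symm ![a, b]
lemma v2_norm2 (a b : ℝ) : ‖v2 a b‖ ^ 2 = a ^ 2 + b ^ 2 := by
  rw [norm2_E2']; rfl

noncomputable def gmap (u : E2) : E3 :=
  WithLp.toLp 2 (![u 0, u 1, Real.sqrt (1 - ‖u‖ ^ 2)] : Fin 3 → ℝ)

lemma norm2_E3 (x : E3) : ‖x‖ ^ 2 = x 0 ^ 2 + x 1 ^ 2 + x 2 ^ 2 := by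
  rw [EuclideanSpace.norm_eq, Real.sq_sqrt (by positivity)]
  simp [Fin.sum_univ_three, Real.norm_eq_abs, sq_abs]

lemma mem_S2_iff (x : E3) : x ∈ S2 ↔ x 0 ^ 2 + x 1 ^ 2 + x 2 ^ 2 = 1 := by
  rw [S2, mem_sphere_zero_iff_norm, ← norm2_E3]
  constructor
  · intro h; rw [h]; norm_num
  · intro h
    have h0 : (0:ℝ) ≤ ‖x‖ := norm_nonneg x
    nlinarith

lemma gmap_apply (u : E2) : gmap u 0 = u 0 ∧ gmap u 1 = u 1 ∧
    gmap u 2 = Real.sqrt (1 - ‖u‖ ^ 2) := ⟨rfl, rfl, rfl⟩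

lemma gmap_mem (u : E2) (hu : ‖u‖ ^ 2 ≤ 1) : gmap u ∈ S2 := by
  rw [mem_S2_iff]
  show u 0 ^ 2 + u 1 ^ 2 + Real.sqrt (1 - ‖u‖ ^ 2) ^ 2 = 1
  rw [Real.sq_sqrt (by linarith), norm2_E2']
  ring

noncomputable abbrev Dset : Set E2 := {u : E2 | ‖u‖ ^ 2 ≤ 3/4}

lemma gmap_lip : LipschitzOnWith 3 gmap Dset := by
  rw [lipschitzOnWith_iff_dist_le_mul]
  intro u hu v hv
  have hsu : ‖u‖ ^ 2 ≤ 3/4 := hu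
  have hsv : ‖v‖ ^ 2 ≤ 3/4 := hv
  set c := Real.sqrt (1 - ‖u‖ ^ 2) with hc
  set d := Real.sqrt (1 - ‖v‖ ^ 2) with hd
  have hc2 : c ^ 2 = 1 - ‖u‖ ^ 2 := Real.sq_sqrt (by linarith)
  have hd2 : d ^ 2 = 1 - ‖v‖ ^ 2 := Real.sq_sqrt (by linarith)
  have hc0 : 0 ≤ c := Real.sqrt_nonneg _
  have hd0 : 0 ≤ d := Real.sqrt_nonneg _
  have hcge : (1:ℝ)/2 ≤ c := by
    rw [hc]; rw [show (1:ℝ)/2 = Real.sqrt (1/4) by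
      rw [show (1:ℝ)/4 = (1/2)^2 by norm_num, Real.sqrt_sq (by norm_num)]]
    exact Real.sqrt_le_sqrt (by linarith)
  have hdge : (1:ℝ)/2 ≤ d := by
    rw [hd]; rw [show (1:ℝ)/2 = Real.sqrt (1/4) by
      rw [show (1:ℝ)/4 = (1/2)^2 by norm_num, Real.sqrt_sq (by norm_num)]]
    exact Real.sqrt_le_sqrt (by linarith)
  have hnu : ‖u‖ ≤ 1 := by nlinarith [norm_nonneg u]
  have hnv : ‖v‖ ≤ 1 := by nlinarith [norm_nonneg v]
  have hdist : |‖u‖ - ‖v‖| ≤ dist u v := by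
    rw [dist_eq_norm]; exact abs_norm_sub_norm_le u v
  have habs := abs_le.mp hdist
  have hdnn : (0:ℝ) ≤ dist u v := dist_nonneg
  have hcd : |c - d| ≤ 2 * dist u v := by
    rw [abs_le]
    constructor
    · nlinarith [norm_nonneg u, norm_nonneg v]
    · nlinarith [norm_nonneg u, norm_nonneg v]
  have hE2 : dist u v ^ 2 = dist (u 0) (v 0) ^ 2 + dist (u 1) (v 1) ^ 2 := by
    rw [EuclideanSpace.dist_eq, Real.sq_sqrt (by positivity), Fin.sum_univ_two]
  have hE3 : dist (gmap u) (gmap v) =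
      Real.sqrt (dist (u 0) (v 0) ^ 2 + dist (u 1) (v 1) ^ 2 + dist c d ^ 2) := by
    rw [EuclideanSpace.dist_eq, Fin.sum_univ_three]
    rfl
  rw [hE3]
  have hcd2 : dist c d ^ 2 ≤ (2 * dist u v) ^ 2 := by
    rw [Real.dist_eq]; exact pow_le_pow_left₀ (abs_nonneg _) hcd 2
  have h9 : dist (u 0) (v 0) ^ 2 + dist (u 1) (v 1) ^ 2 + dist c d ^ 2
      ≤ (3 * dist u v) ^ 2 := by nlinarith [hE2, hcd2, hdnn]
  have h3 : ((3:NNReal):ℝ) * dist u v = 3 * dist u v := by norm_num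
  rw [h3]
  calc Real.sqrt (dist (u 0) (v 0) ^ 2 + dist (u 1) (v 1) ^ 2 + dist c d ^ 2)
      ≤ Real.sqrt ((3 * dist u v) ^ 2) := Real.sqrt_le_sqrt h9
    _ = 3 * dist u v := Real.sqrt_sq (by positivity)

lemma measure_Dset_lt_top : μ2 Dset < ⊤ := by
  have hsub : Dset ⊆ Metric.closedBall (0 : E2) 1 := by
    intro u hu
    have : ‖u‖ ^ 2 ≤ 3/4 := hu
    have h1 : ‖u‖ ≤ 1 := by nlinarith [norm_nonneg u]
    simpa [Metric.mem_closedBall, dist_zero_right] using h1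
  exact lt_of_le_of_lt (measure_mono hsub)
    (isCompact_closedBall _ _).measure_lt_top

noncomputable def cap (k : Fin 3) (σ : ℝ) : Set E3 :=
  {x : E3 | x ∈ S2 ∧ 1/3 ≤ x k ^ 2 ∧ 0 ≤ σ * x k}

lemma cap_subset_image : cap 2 1 ⊆ gmap '' Dset := by
  rintro x ⟨hxS, hx13, hx0⟩
  rw [one_mul] at hx0
  rw [mem_S2_iff] at hxS
  have hn : ‖v2 (x 0) (x 1)‖ ^ 2 = x 0 ^ 2 + x 1 ^ 2 := v2_norm2 _ _
  refine ⟨v2 (x 0) (x 1), ?_, ?_⟩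
  · show ‖v2 (x 0) (x 1)‖ ^ 2 ≤ 3/4
    rw [hn]; nlinarith
  · have h2 : Real.sqrt (1 - ‖v2 (x 0) (x 1)‖ ^ 2) = x 2 := by
      rw [hn, show 1 - (x 0 ^ 2 + x 1 ^ 2) = x 2 ^ 2 by nlinarith, Real.sqrt_sq hx0]
    ext j
    fin_cases j
    · rfl
    · rfl
    · exact h2

lemma cap_measure_lt_top : μ3 (cap 2 1) < ⊤ := by
  refine lt_of_le_of_lt (measure_mono cap_subset_image) ?_
  refine lt_of_le_of_lt (gmap_lip.hausdorffMeasure_image_le (by norm_num : (0:ℝ) ≤ 2) ) ?_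
  exact ENNReal.mul_lt_top (ENNReal.rpow_lt_top_of_nonneg (by norm_num) ENNReal.coe_ne_top) measure_Dset_lt_top

lemma cap_eq_preimage (k : Fin 3) (σ : ℝ) (hσ : σ ^ 2 = 1) :
    cap k σ = (sp (Equiv.swap k 2) (fun j => if j = 2 then σ else 1)
      (by intro j; by_cases h : j = 2 <;> simp [h, hσ]) : E3 ≃ₗᵢ[ℝ] E3) ⁻¹' (cap 2 1) := by
  set e := sp (Equiv.swap k 2) (fun j => if j = 2 then σ else 1)
      (by intro j; by_cases h : j = 2 <;> simp [h, hσ])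
  ext x
  have he2 : e x 2 = σ * x k := by
    rw [sp_apply, if_pos rfl, Equiv.swap_apply_right]
  have heS : e x ∈ S2 ↔ x ∈ S2 := by
    simp only [S2, mem_sphere_zero_iff_norm]
    rw [e.norm_map]
  simp only [cap, Set.mem_preimage, Set.mem_setOf_eq, he2, heS, one_mul, mul_pow, hσ, one_mul]

lemma inv_measure (e : E3 ≃ₗᵢ[ℝ] E3) (t : Set E3) : μ3 (⇑e ⁻¹' t) = μ3 t := by
  rw [← e.coe_toIsometryEquiv]
  exact IsometryEquiv.hausdorffMeasure_preimage e.toIsometryEquiv 2 t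

lemma cap_measure (k : Fin 3) (σ : ℝ) (hσ : σ ^ 2 = 1) : μ3 (cap k σ) = μ3 (cap 2 1) := by
  rw [cap_eq_preimage k σ hσ]
  exact inv_measure _ _

lemma S2_subset_caps : S2 ⊆ cap 0 1 ∪ cap 0 (-1) ∪ cap 1 1 ∪ cap 1 (-1)
    ∪ cap 2 1 ∪ cap 2 (-1) := by
  intro x hx
  have hsum := (mem_S2_iff x).mp hx
  have hbig : 1/3 ≤ x 0 ^ 2 ∨ 1/3 ≤ x 1 ^ 2 ∨ 1/3 ≤ x 2 ^ 2 := by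
    by_contra h
    push_neg at h
    nlinarith [h.1, h.2.1, h.2.2]
  rcases hbig with h | h | h
  · rcases le_total 0 (x 0) with h0 | h0
    · exact Or.inl <| Or.inl <| Or.inl <| Or.inl <| Or.inl ⟨hx, h, by linarith⟩
    · exact Or.inl <| Or.inl <| Or.inl <| Or.inl <| Or.inr ⟨hx, h, by linarith⟩
  · rcases le_total 0 (x 1) with h0 | h0
    · exact Or.inl <| Or.inl <| Or.inl <| Or.inr ⟨hx, h, by linarith⟩
    · exact Or.inl <| Or.inl <| Or.inr ⟨hx, h, by linarith⟩
  · rcases le_total 0 (x 2) with h0 | h0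
    · exact Or.inl <| Or.inr ⟨hx, h, by linarith⟩
    · exact Or.inr ⟨hx, h, by linarith⟩

lemma measure_S2_ne_top : μ3 S2 ≠ ⊤ := by
  have h1 : (1:ℝ)^2 = 1 := one_pow 2
  have hm : (-1:ℝ)^2 = 1 := by norm_num
  have hle := measure_mono (μ := μ3) S2_subset_caps
  have : μ3 (cap 0 1 ∪ cap 0 (-1) ∪ cap 1 1 ∪ cap 1 (-1) ∪ cap 2 1 ∪ cap 2 (-1)) < ⊤ := by
    refine lt_of_le_of_lt (measure_union_le _ _) ?_
    refine ENNReal.add_lt_top.mpr ⟨?_, ?_⟩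
    · refine lt_of_le_of_lt (measure_union_le _ _) ?_
      refine ENNReal.add_lt_top.mpr ⟨?_, ?_⟩
      · refine lt_of_le_of_lt (measure_union_le _ _) ?_
        refine ENNReal.add_lt_top.mpr ⟨?_, ?_⟩
        · refine lt_of_le_of_lt (measure_union_le _ _) ?_
          refine ENNReal.add_lt_top.mpr ⟨?_, ?_⟩
          · refine lt_of_le_of_lt (measure_union_le _ _) ?_
            refine ENNReal.add_lt_top.mpr ⟨?_, ?_⟩
            · rw [cap_measure 0 1 h1]; exact cap_measure_lt_top
            · rw [cap_measure 0 (-1) hm]; exact cap_measure_lt_top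
          · rw [cap_measure 1 1 h1]; exact cap_measure_lt_top
        · rw [cap_measure 1 (-1) hm]; exact cap_measure_lt_top
      · exact cap_measure_lt_top
    · rw [cap_measure 2 (-1) hm]; exact cap_measure_lt_top
  exact (lt_of_le_of_lt hle this).ne

noncomputable def projE (x : E3) : E2 := v2 (x 0) (x 1)

lemma projE_lip : LipschitzWith 1 projE := by
  rw [lipschitzWith_iff_dist_le_mul]
  intro x y
  rw [NNReal.coe_one, one_mul, EuclideanSpace.dist_eq, EuclideanSpace.dist_eq,
    Fin.sum_univ_two, Fin.sum_univ_three]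
  apply Real.sqrt_le_sqrt
  have : dist (projE x 0) (projE y 0) = dist (x 0) (y 0) := rfl
  have h2 : dist (projE x 1) (projE y 1) = dist (x 1) (y 1) := rfl
  rw [this, h2]
  linarith [sq_nonneg (dist (x 2) (y 2))]

lemma measure_S2_ne_zero : μ3 S2 ≠ 0 := by
  have hsub : Metric.closedBall (0 : E2) 1 ⊆ projE '' S2 := by
    intro u hu
    have hu1 : ‖u‖ ≤ 1 := by simpa [Metric.mem_closedBall, dist_zero_right] using hu
    have hu2 : ‖u‖ ^ 2 ≤ 1 := by nlinarith [norm_nonneg u]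
    refine ⟨gmap u, gmap_mem u hu2, ?_⟩
    ext j
    fin_cases j <;> rfl
  have hpos : 0 < μ2 (Metric.closedBall (0 : E2) 1) := by
    refine lt_of_lt_of_le (Metric.isOpen_ball.measure_pos μ2 ?_) (measure_mono Metric.ball_subset_closedBall)
    exact ⟨0, by simp⟩
  have himg := projE_lip.hausdorffMeasure_image_le (by norm_num : (0:ℝ) ≤ 2) S2
  intro h0
  rw [h0] at himg
  simp only [mul_zero, le_zero_iff] at himg
  have hlt : (0:ℝ≥0∞) < μ2 (projE '' S2) := lt_of_lt_of_le hpos (measure_mono hsub)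
  exact absurd himg hlt.ne'

lemma contCoord (i : Fin 3) : Continuous (fun x : E3 => x i) := by
  exact (continuous_apply i).comp (PiLp.continuous_ofLp (p := 2) (β := fun _ : Fin 3 => ℝ))

lemma intS (f : E3 → ℝ) (hf : Continuous f) : IntegrableOn f S2 μ3 := by
  have hfin : IsFiniteMeasure (μ3.restrict S2) :=
    ⟨by rw [Measure.restrict_apply_univ]; exact measure_S2_ne_top.lt_top⟩
  obtain ⟨C, hC⟩ := (isCompact_sphere (0:E3) 1).exists_bound_of_continuousOn
    hf.continuousOn
  refine Integrable.mono' (integrable_const C) hf.aestronglyMeasurable.restrict ?_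
  exact (ae_restrict_iff' Metric.isClosed_sphere.measurableSet).mpr (Filter.Eventually.of_forall hC)

noncomputable def Kc : ℝ := (μ3 S2).toReal

lemma Kc_pos : 0 < Kc :=
  ENNReal.toReal_pos measure_S2_ne_zero measure_S2_ne_top

lemma Joff (i j : Fin 3) (hij : i ≠ j) : ∫ x in S2, x i * x j ∂μ3 = 0 := by
  have hε : ∀ k : Fin 3, (if k = i then (-1:ℝ) else 1) ^ 2 = 1 := by
    intro k; by_cases h : k = i <;> simp [h]
  set e := sp (Equiv.refl (Fin 3)) (fun k => if k = i then (-1:ℝ) else 1) hε with he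
  have key := inv_integral e (fun x => x i * x j)
  have hpt : ∀ x : E3, (e x) i * (e x) j = -(x i * x j) := by
    intro x
    rw [sp_apply, sp_apply]
    simp [hij.symm]
  simp only [hpt] at key
  rw [integral_neg] at key
  linarith

lemma Jdiag (i : Fin 3) : ∫ x in S2, x i * x i ∂μ3 = Kc / 3 := by
  have hswap : ∀ k : Fin 3, ∫ x in S2, x k * x k ∂μ3 = ∫ x in S2, x 0 * x 0 ∂μ3 := by
    intro k
    have hε : ∀ m : Fin 3, (1:ℝ) ^ 2 = 1 := fun _ => one_pow 2
    set e := sp (Equiv.swap 0 k) (fun _ => (1:ℝ)) (fun _ => one_pow 2)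
    have key := inv_integral e (fun x => x 0 * x 0)
    have hpt : ∀ x : E3, (e x) 0 * (e x) 0 = x k * x k := by
      intro x
      rw [sp_apply]
      rw [Equiv.swap_apply_left]
      ring
    simp only [hpt] at key
    exact key
  have hint : ∀ a b : Fin 3, IntegrableOn (fun x : E3 => x a * x b) S2 μ3 :=
    fun a b => intS _ ((contCoord a).mul (contCoord b))
  have hsum : ∫ x in S2, (∑ k : Fin 3, x k * x k) ∂μ3 = Kc := by
    rw [setIntegral_congr_fun Metric.isClosed_sphere.measurableSet
      (fun x hx => by
        have := (mem_S2_iff x).mp hx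
        show (∑ k : Fin 3, x k * x k) = (1:ℝ)
        rw [Fin.sum_univ_three]
        nlinarith)]
    rw [setIntegral_const, smul_eq_mul, mul_one, Kc, measureReal_def]
  rw [integral_finset_sum _ (fun k _ => hint k k), Fin.sum_univ_three,
    hswap 1, hswap 2] at hsum
  rw [hswap i]
  linarith

lemma IsumSq : ∫ x in S2, (x 0 ^ 2 + x 1 ^ 2 + x 2 ^ 2) ∂μ3 = Kc := by
  rw [setIntegral_congr_fun Metric.isClosed_sphere.measurableSet
    (fun x hx => by
      have := (mem_S2_iff x).mp hx
      show x 0 ^ 2 + x 1 ^ 2 + x 2 ^ 2 = (1:ℝ)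
      linarith)]
  rw [setIntegral_const, smul_eq_mul, mul_one, Kc, measureReal_def]

lemma Ic3 (v : Fin 3 → ℝ) :
    ∫ x in S2, (∑ i, v i * x i) ^ 2 ∂μ3 = (v 0 ^ 2 + v 1 ^ 2 + v 2 ^ 2) * Kc / 3 := by
  have hint : ∀ a b : Fin 3, IntegrableOn (fun x : E3 => x a * x b) S2 μ3 :=
    fun a b => intS _ ((contCoord a).mul (contCoord b))
  have hpt : ∀ x : E3, (∑ i, v i * x i) ^ 2 =
      ∑ p : Fin 3 × Fin 3, (v p.1 * v p.2) * (x p.1 * x p.2) := by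
    intro x
    rw [Fintype.sum_prod_type, sq, Finset.sum_mul_sum]
    refine Finset.sum_congr rfl fun i _ => Finset.sum_congr rfl fun j _ => by ring
  simp only [hpt]
  rw [integral_finset_sum _ (fun p _ => ((hint p.1 p.2).const_mul _))]
  have hc : ∀ p : Fin 3 × Fin 3, ∫ x in S2, (v p.1 * v p.2) * (x p.1 * x p.2) ∂μ3
      = (v p.1 * v p.2) * ∫ x in S2, x p.1 * x p.2 ∂μ3 := fun p => integral_const_mul _ _
  simp only [hc]
  rw [Fintype.sum_prod_type, Fin.sum_univ_three]
  rw [Fin.sum_univ_three, Fin.sum_univ_three, Fin.sum_univ_three]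
  rw [Jdiag 0, Jdiag 1, Jdiag 2, Joff 0 1 (by decide), Joff 0 2 (by decide),
    Joff 1 2 (by decide), Joff 1 0 (by decide), Joff 2 0 (by decide), Joff 2 1 (by decide)]
  ring

lemma pauliObs_eq (a : E3) : pauliObs a =
    !![(a 2 : ℂ), (a 0 : ℂ) - (a 1 : ℂ) * Complex.I;
       (a 0 : ℂ) + (a 1 : ℂ) * Complex.I, -(a 2 : ℂ)] := by
  ext i j
  fin_cases i <;> fin_cases j <;>
    simp [pauliObs, pauli, Fin.sum_univ_three, Matrix.sum_apply] <;> ring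

lemma trace_comm_formula (ρ : Matrix (Fin 2) (Fin 2) ℂ) (p q cr ci : ℝ)
    (h00 : ρ 0 0 = (p:ℂ)) (h11 : ρ 1 1 = (q:ℂ)) (h01 : ρ 0 1 = (cr:ℂ) + (ci:ℂ) * Complex.I)
    (h10 : ρ 1 0 = (cr:ℂ) - (ci:ℂ) * Complex.I) (a b : E3) :
    (ρ * (pauliObs a * pauliObs b - pauliObs b * pauliObs a)).trace =
    2 * Complex.I * ((((a 1 * b 2 - a 2 * b 1) * (2*cr)
      + (a 2 * b 0 - a 0 * b 2) * (-2*ci)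
      + (a 0 * b 1 - a 1 * b 0) * (p - q)) : ℝ) : ℂ) := by
  rw [Matrix.trace_fin_two]
  simp [Matrix.mul_apply, Matrix.sub_apply, Fin.sum_univ_two, pauliObs_eq,
    h00, h11, h01, h10]
  push_cast
  ring_nf

lemma trace_eq_sum_eigen (ρ : Matrix (Fin 2) (Fin 2) ℂ) (hH : ρ.IsHermitian) :
    ρ.trace = ∑ i, (hH.eigenvalues i : ℂ) := by
  exact hH.trace_eq_sum_eigenvalues

lemma minmax (f : Fin 2 → ℝ) (lmin lmax : ℝ)
    (hmin : IsLeast (Set.range f) lmin) (hmax : IsGreatest (Set.range f) lmax) :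
    lmin + lmax = f 0 + f 1 ∧ lmin * lmax = f 0 * f 1 := by
  have hr : Set.range f = {f 0, f 1} := by
    ext y
    simp [Fin.exists_fin_two, eq_comm]
  have h0min : lmin ≤ f 0 := hmin.2 ⟨0, rfl⟩
  have h1min : lmin ≤ f 1 := hmin.2 ⟨1, rfl⟩
  have h0max : f 0 ≤ lmax := hmax.2 ⟨0, rfl⟩
  have h1max : f 1 ≤ lmax := hmax.2 ⟨1, rfl⟩
  have hi : lmin = f 0 ∨ lmin = f 1 := by
    have := hmin.1; rw [hr] at this; simpa using this
  have hj : lmax = f 0 ∨ lmax = f 1 := by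
    have := hmax.1; rw [hr] at this; simpa using this
  rcases hi with hi | hi <;> rcases hj with hj | hj <;> subst hi <;> subst hj
  · rw [le_antisymm h1max h1min]; exact ⟨rfl, rfl⟩
  · constructor <;> ring
  · constructor <;> ring
  · rw [le_antisymm h0max h0min]; exact ⟨rfl, rfl⟩


set_option maxHeartbeats 2000000 in
/-- The averaged generalized Robertson bound for a non-maximally-mixed qubit
equals `2/9`, independent of the purity. -/
theorem averaged_gen_robertson_bound (ρ : Matrix (Fin 2) (Fin 2) ℂ)
    (hρ : ρ.PosSemidef) (hρtr : ρ.trace = 1)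
    (hmm : ρ ≠ (1 / 2 : ℂ) • (1 : Matrix (Fin 2) (Fin 2) ℂ))
    (lmin lmax : ℝ)
    (hmin : IsLeast (Set.range hρ.1.eigenvalues) lmin)
    (hmax : IsGreatest (Set.range hρ.1.eigenvalues) lmax) :
    (⨍ a in Metric.sphere (0 : EuclideanSpace ℝ (Fin 3)) 1,
      ⨍ b in Metric.sphere (0 : EuclideanSpace ℝ (Fin 3)) 1,
        ((lmax + lmin) ^ 2 / (4 * (lmax - lmin) ^ 2)) * ‖
          ((ρ * (pauliObs a * pauliObs b - pauliObs b * pauliObs a)).trace)‖ ^ 2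
        ∂(μH[2]) ∂(μH[2])) = 2 / 9 := by
  have hH : ρᴴ = ρ := hρ.1
  set p := (ρ 0 0).re with hpdef
  set q := (ρ 1 1).re with hqdef
  set cr := (ρ 0 1).re with hcrdef
  set ci := (ρ 0 1).im with hcidef
  have e00 := congrFun (congrFun hH 0) 0
  rw [Matrix.conjTranspose_apply] at e00
  have e11 := congrFun (congrFun hH 1) 1
  rw [Matrix.conjTranspose_apply] at e11
  have e10 := congrFun (congrFun hH 1) 0
  rw [Matrix.conjTranspose_apply] at e10
  have h00 : ρ 0 0 = (p : ℂ) := by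
    rw [Complex.star_def, Complex.conj_eq_iff_re] at e00
    exact e00.symm
  have h11 : ρ 1 1 = (q : ℂ) := by
    rw [Complex.star_def, Complex.conj_eq_iff_re] at e11
    exact e11.symm
  have h01 : ρ 0 1 = (cr : ℂ) + (ci : ℂ) * Complex.I := (Complex.re_add_im (ρ 0 1)).symm
  have h10 : ρ 1 0 = (cr : ℂ) - (ci : ℂ) * Complex.I := by
    rw [← e10, h01]
    apply Complex.ext <;> simp
  have htrpq : p + q = 1 := by
    have h := hρtr
    rw [Matrix.trace_fin_two, h00, h11] at h
    exact_mod_cast h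
  have esum : hρ.1.eigenvalues 0 + hρ.1.eigenvalues 1 = 1 := by
    have h := trace_eq_sum_eigen ρ hρ.1
    rw [hρtr, Fin.sum_univ_two] at h
    exact_mod_cast h.symm
  have eprod : hρ.1.eigenvalues 0 * hρ.1.eigenvalues 1 = p * q - (cr ^ 2 + ci ^ 2) := by
    have h := hρ.1.det_eq_prod_eigenvalues
    rw [Fin.prod_univ_two] at h
    have h2 : ρ.det = ((p * q - (cr ^ 2 + ci ^ 2) : ℝ) : ℂ) := by
      rw [Matrix.det_fin_two, h00, h11, h01, h10]
      push_cast
      ring_nf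
      simp only [Complex.I_sq]
      ring
    rw [h2] at h
    have h4 := congrArg Complex.re h
    simpa [← Complex.ofReal_pow] using h4.symm
  obtain ⟨hs, hp2⟩ := minmax hρ.1.eigenvalues lmin lmax hmin hmax
  have hsum1 : lmin + lmax = 1 := by rw [hs, esum]
  have hprod : lmin * lmax = p * q - (cr ^ 2 + ci ^ 2) := by rw [hp2, eprod]
  set R : ℝ := (2 * cr) ^ 2 + (-2 * ci) ^ 2 + (p - q) ^ 2 with hRdef
  have hR : (lmax - lmin) ^ 2 = R := by
    rw [hRdef]
    linear_combination (lmin + lmax + 1) * hsum1 - 4 * hprod - (p + q + 1) * htrpq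
  have hRne : R ≠ 0 := by
    intro h0
    apply hmm
    rw [hRdef] at h0
    have hcr : cr = 0 := by nlinarith [sq_nonneg (2 * cr), sq_nonneg (-2 * ci), sq_nonneg (p - q)]
    have hci : ci = 0 := by nlinarith [sq_nonneg (2 * cr), sq_nonneg (-2 * ci), sq_nonneg (p - q)]
    have hpq : p = q := by nlinarith [sq_nonneg (2 * cr), sq_nonneg (-2 * ci), sq_nonneg (p - q)]
    have hp12 : p = 1 / 2 := by linarith
    have hq12 : q = 1 / 2 := by linarith
    rw [Matrix.eta_fin_two ρ, h00, h01, h10, h11, hcr, hci, hp12, hq12,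
      Matrix.one_fin_two]
    norm_num
  have habs : ∀ z : ℝ, ‖(2 * Complex.I * (z : ℂ))‖ ^ 2 = 4 * z ^ 2 := by
    intro z
    rw [norm_mul, norm_mul, Complex.norm_I, show ‖(2:ℂ)‖ = 2 by norm_num, Complex.norm_real,
      mul_one, mul_pow, Real.norm_eq_abs, sq_abs]
    ring
  set r : Fin 3 → ℝ := ![2 * cr, -2 * ci, p - q] with hrdef
  have hRr : r 0 ^ 2 + r 1 ^ 2 + r 2 ^ 2 = R := by
    simp [hrdef, hRdef]
  have hpoint : ∀ a b : E3,
      (lmax + lmin) ^ 2 / (4 * (lmax - lmin) ^ 2) * ‖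
        ((ρ * (pauliObs a * pauliObs b - pauliObs b * pauliObs a)).trace)‖ ^ 2
      = (∑ i, (![r 1 * a 2 - r 2 * a 1, r 2 * a 0 - r 0 * a 2,
          r 0 * a 1 - r 1 * a 0] : Fin 3 → ℝ) i * b i) ^ 2 / R := by
    intro a b
    rw [trace_comm_formula ρ p q cr ci h00 h11 h01 h10 a b, habs,
      show lmax + lmin = 1 by linarith, hR, Fin.sum_univ_three]
    simp only [hrdef, Matrix.cons_val_zero, Matrix.cons_val_one, Matrix.head_cons,
      Matrix.cons_val_two, Matrix.tail_cons]
    field_simp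
    ring
  have hKne : Kc ≠ 0 := Kc_pos.ne'
  have hinner : ∀ a : E3,
      (⨍ b in S2, (lmax + lmin) ^ 2 / (4 * (lmax - lmin) ^ 2) * ‖
        ((ρ * (pauliObs a * pauliObs b - pauliObs b * pauliObs a)).trace)‖ ^ 2 ∂μ3)
      = (R * (a 0 ^ 2 + a 1 ^ 2 + a 2 ^ 2) - (∑ i, r i * a i) ^ 2) / (3 * R) := by
    intro a
    simp only [hpoint a]
    rw [setAverage_eq, integral_div,
      Ic3 (![r 1 * a 2 - r 2 * a 1, r 2 * a 0 - r 0 * a 2, r 0 * a 1 - r 1 * a 0])]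
    have hv : (![r 1 * a 2 - r 2 * a 1, r 2 * a 0 - r 0 * a 2,
        r 0 * a 1 - r 1 * a 0] : Fin 3 → ℝ) 0 ^ 2
        + (![r 1 * a 2 - r 2 * a 1, r 2 * a 0 - r 0 * a 2, r 0 * a 1 - r 1 * a 0] : Fin 3 → ℝ) 1 ^ 2
        + (![r 1 * a 2 - r 2 * a 1, r 2 * a 0 - r 0 * a 2, r 0 * a 1 - r 1 * a 0] : Fin 3 → ℝ) 2 ^ 2
        = R * (a 0 ^ 2 + a 1 ^ 2 + a 2 ^ 2) - (∑ i, r i * a i) ^ 2 := by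
      rw [← hRr, Fin.sum_univ_three]
      simp only [Matrix.cons_val_zero, Matrix.cons_val_one, Matrix.head_cons,
        Matrix.cons_val_two, Matrix.tail_cons]
      try ring
    rw [hv, smul_eq_mul]
    rw [show μ3.real S2 = Kc from rfl]
    field_simp
    try ring
  rw [setAverage_eq]
  rw [setIntegral_congr_fun Metric.isClosed_sphere.measurableSet
    (fun a _ => hinner a)]
  have hg : ∀ a : E3, (R * (a 0 ^ 2 + a 1 ^ 2 + a 2 ^ 2) - (∑ i, r i * a i) ^ 2) / (3 * R)
      = (1 / 3) * (a 0 ^ 2 + a 1 ^ 2 + a 2 ^ 2) - (1 / (3 * R)) * (∑ i, r i * a i) ^ 2 := by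
    intro a
    field_simp
  simp only [hg]
  have hint1 : IntegrableOn (fun a : E3 => (1 / 3 : ℝ) * (a 0 ^ 2 + a 1 ^ 2 + a 2 ^ 2)) S2 μ3 :=
    intS _ (continuous_const.mul ((((contCoord 0).pow 2).add ((contCoord 1).pow 2)).add
      ((contCoord 2).pow 2)))
  have hint2 : IntegrableOn (fun a : E3 => (1 / (3 * R)) * (∑ i, r i * a i) ^ 2) S2 μ3 :=
    intS _ (continuous_const.mul ((continuous_finset_sum _
      (fun i _ => continuous_const.mul (contCoord i))).pow 2))
  rw [integral_sub hint1 hint2, integral_const_mul, integral_const_mul, IsumSq, Ic3 r, hRr]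
  rw [show μ3.real S2 = Kc from rfl, smul_eq_mul]
  field_simp
  ring
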